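/- Let (m₁,m₂,m₃,ξ,p) be a collision solution of the reduced two-body system on [t₀, t*) with t* < ∞ and ξ(t) → +∞ as t → t*⁻. Then m₃ decays at least like 1/ξ: there exist M > 0 and t₁ ∈ [t₀, t*) such that |m₃(t)|·ξ(t) ≤ M for all t ∈ [t₁, t*). -/

import Mathlib

open Filter Set


open Filter Set

private lemma monoOn_Ico {g d : ℝ → ℝ} {a T : ℝ}
    (hg : ∀ t ∈ Set.Ico a T, HasDerivAt g (d t) t)
    (hd : ∀ t ∈ Set.Ico a T, 0 ≤ d t) : MonotoneOn g (Set.Ico a T) := by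
  apply monotoneOn_of_deriv_nonneg (convex_Ico a T)
  · exact fun t ht => (hg t ht).continuousAt.continuousWithinAt
  · intro t ht
    rw [interior_Ico] at ht
    exact ((hg t (Ioo_subset_Ico_self ht)).differentiableAt).differentiableWithinAt
  · intro t ht
    rw [interior_Ico] at ht
    rw [(hg t (Ioo_subset_Ico_self ht)).deriv]
    exact hd t (Ioo_subset_Ico_self ht)

private lemma stay_above {f d : ℝ → ℝ} {a T c : ℝ}
    (hf : ∀ t ∈ Set.Ico a T, HasDerivAt f (d t) t)
    (hd : ∀ t ∈ Set.Ico a T, f t = c → 0 < d t)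
    (hfa : c ≤ f a) : ∀ t ∈ Set.Ico a T, c ≤ f t := by
  intro t ht
  by_contra hlt
  push_neg at hlt
  set A : Set ℝ := {s | s ∈ Set.Icc a t ∧ ∀ r ∈ Set.Icc a s, c ≤ f r} with hA
  have haA : a ∈ A := by
    refine ⟨⟨le_refl a, ht.1⟩, fun r hr => ?_⟩
    have : r = a := le_antisymm hr.2 hr.1
    rw [this]; exact hfa
  have hbdd : BddAbove A := ⟨t, fun s hs => hs.1.2⟩
  have hne : A.Nonempty := ⟨a, haA⟩
  set q := sSup A with hq
  have hqa : a ≤ q := le_csSup hbdd haA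
  have hqt : q ≤ t := csSup_le hne (fun s hs => hs.1.2)
  have hqI : q ∈ Set.Ico a T := ⟨hqa, lt_of_le_of_lt hqt ht.2⟩
  have hlo : ∀ r, a ≤ r → r < q → c ≤ f r := by
    intro r har hrq
    obtain ⟨s, hsA, hrs⟩ := exists_lt_of_lt_csSup hne hrq
    exact hsA.2 r ⟨har, le_of_lt hrs⟩
  have hfq : c ≤ f q := by
    rcases eq_or_lt_of_le hqa with h | h
    · rw [← h]; exact hfa
    · have hcont : Tendsto f (nhdsWithin q (Set.Iio q)) (nhds (f q)) :=
        ((hf q hqI).continuousAt.tendsto).mono_left nhdsWithin_le_nhds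
      refine ge_of_tendsto hcont ?_
      filter_upwards [Ioo_mem_nhdsLT h] with r hr
      exact hlo r (le_of_lt hr.1) hr.2
  have hqA : q ∈ A := by
    refine ⟨⟨hqa, hqt⟩, fun r hr => ?_⟩
    rcases lt_or_eq_of_le hr.2 with h | h
    · exact hlo r hr.1 h
    · rw [h]; exact hfq
  have hqlt : q < t := by
    rcases lt_or_eq_of_le hqt with h | h
    · exact h
    · exfalso; rw [← h] at hlt; exact absurd hfq (not_le.2 hlt)
  have hev : ∀ᶠ s in nhdsWithin q (Set.Ioi q), c < f s := by
    rcases lt_or_eq_of_le hfq with h | h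
    · have hcont : ContinuousAt f q := (hf q hqI).continuousAt
      have h1 : f ⁻¹' (Set.Ioi c) ∈ nhds q := hcont.preimage_mem_nhds (Ioi_mem_nhds h)
      exact (eventually_iff.2 (mem_nhdsWithin_of_mem_nhds h1))
    · have hdq : 0 < d q := hd q hqI h.symm
      have hslope := hasDerivAt_iff_tendsto_slope.mp (hf q hqI)
      have h2 : ∀ᶠ s in nhdsWithin q {q}ᶜ, 0 < slope f q s :=
        hslope.eventually (eventually_gt_nhds hdq)
      have h3 : ∀ᶠ s in nhdsWithin q (Set.Ioi q), 0 < slope f q s :=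
        h2.filter_mono (nhdsWithin_mono q (fun x hx => ne_of_gt hx))
      filter_upwards [h3, self_mem_nhdsWithin] with s hs hs'
      rw [slope_def_field] at hs
      have hsq : 0 < s - q := sub_pos.2 hs'
      rcases div_pos_iff.mp hs with ⟨h5, _⟩ | ⟨_, h6⟩
      · linarith
      · linarith
  rw [eventually_iff, mem_nhdsGT_iff_exists_Ioo_subset] at hev
  obtain ⟨uu, huu, hsub⟩ := hev
  have huu' : q < uu := huu
  set s0 := min ((q + uu)/2) t with hs0
  have hqs0 : q < s0 := lt_min (by linarith) hqlt
  have hs0A : s0 ∈ A := by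
    refine ⟨⟨le_trans hqa (le_of_lt hqs0), min_le_right _ _⟩, fun r hr => ?_⟩
    rcases le_or_gt r q with h | h
    · exact hqA.2 r ⟨hr.1, h⟩
    · have hrs0 : r ≤ s0 := hr.2
      have : r < uu := by
        have : s0 ≤ (q + uu)/2 := min_le_left _ _
        linarith
      exact le_of_lt (hsub ⟨h, this⟩)
  have : s0 ≤ q := le_csSup hbdd hs0A
  exact absurd hqs0 (not_lt.2 this)

private lemma tail_helper {t0 tstar : ℝ} (ht0 : t0 < tstar) {Q : ℝ → Prop}
    (h : ∀ᶠ x in nhdsWithin tstar (Set.Iio tstar), Q x) :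
    ∃ t1, t1 ∈ Set.Ico t0 tstar ∧ ∀ t ∈ Set.Ico t1 tstar, Q t := by
  rw [eventually_iff, mem_nhdsLT_iff_exists_Ioo_subset] at h
  obtain ⟨l, hl, hsub⟩ := h
  have hl' : l < tstar := hl
  refine ⟨max t0 ((l + tstar)/2), ⟨le_max_left _ _, ?_⟩, ?_⟩
  · exact max_lt ht0 (by linarith)
  · intro t ht
    apply hsub
    constructor
    · have h1 : (l + tstar)/2 ≤ t := le_trans (le_max_right _ _) ht.1
      linarith
    · exact ht.2

private lemma scalar_keydP (m1v m2v m3v xiv pv H0 C0 uv hb Pv dPv : ℝ)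
    (huv : uv = m3v*xiv - m2v/2) (hPv : Pv = pv - m1v/2)
    (hdPv : dPv = -(xiv^2+1)*(1+m2v*m3v-2*m3v^2*xiv) - (xiv*(-m2v^2+m3v^2+2*m2v*m3v*xiv))/2)
    (hF : Pv^2 + uv^2 - xiv - (m1v^2+m2v^2)/4 = H0)
    (h1 : m1v^2 ≤ C0) (h2 : m2v^2 ≤ C0) (h3 : m3v^2 ≤ C0) (hC0 : 0 ≤ C0)
    (hb1 : H0 ≤ hb - C0/2) (hb2 : -(hb - C0/2) ≤ H0)
    (hxiv : 8*(hb + C0)+16 ≤ xiv)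
    (hPt : Pv^2 ≤ 1) :
    xiv^2/4 ≤ dPv := by
  have hbnn : 0 ≤ hb := by nlinarith [abs_nonneg H0]
  have hxpos : (0:ℝ) < xiv := by linarith
  have hu2 : uv^2 ≤ xiv + hb := by linarith [sq_nonneg Pv]
  have hid : xiv * dPv = (xiv^2+1)*(2*uv^2 - xiv) + m2v * uv - (m3v * xiv)^2/2 := by
    rw [hdPv, huv]; ring
  have hgoal : xiv * (xiv^2/4) ≤ xiv * dPv := by
    rw [hid]
    have e1 : xiv - 2*hb - 2 ≤ 2*uv^2 - xiv := by linarith [sq_nonneg m1v, sq_nonneg m2v]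
    have e2 : -(C0 + xiv + hb)/2 ≤ m2v * uv := by linarith [sq_nonneg (m2v + uv)]
    have e3 : (m3v * xiv)^2 ≤ C0 * xiv^2 := by
      have := mul_le_mul_of_nonneg_right h3 (sq_nonneg xiv)
      calc (m3v * xiv)^2 = m3v^2 * xiv^2 := by ring
        _ ≤ C0 * xiv^2 := this
    have e4 : (0:ℝ) < xiv^2 + 1 := by positivity
    have e6 : 2*hb + 2 + C0/2 ≤ xiv/4 := by linarith
    have h6 : (2*hb + 2 + C0/2) * xiv^2 ≤ xiv * xiv^2 / 4 := by
      have := mul_le_mul_of_nonneg_right e6 (sq_nonneg xiv)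
      linarith [this]
    have h7 : (0:ℝ) ≤ xiv * xiv^2 := by positivity
    linarith [mul_le_mul_of_nonneg_left e1 (le_of_lt e4), h6, h7, e2, e3]
  exact le_of_mul_le_mul_left hgoal hxpos

private lemma scalar_delta (m1v m3v pv lam C0 : ℝ)
    (h1 : m1v^2 ≤ C0) (h3 : m3v^2 ≤ C0) (hlam : 1 ≤ lam)
    (hp : pv - m1v/2 = -lam) :
    |m3v * (m1v - 3/2*pv)| ≤ (2*C0+2)*lam := by
  have hC0 : 0 ≤ C0 := le_trans (sq_nonneg m3v) h3
  have hpv : pv = -lam + m1v/2 := by linarith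
  have hδ : m3v * (m1v - 3/2*pv) = (1/4)*(m3v*m1v) + (3/2)*lam*m3v := by
    rw [hpv]; ring
  have hm31 : m3v*m1v ≤ C0 := by nlinarith [sq_nonneg (m3v - m1v)]
  have hm31' : -C0 ≤ m3v*m1v := by nlinarith [sq_nonneg (m3v + m1v)]
  have hm3up : m3v ≤ (1+C0)/2 := by nlinarith [sq_nonneg (m3v - 1)]
  have hm3lo : -(1+C0)/2 ≤ m3v := by nlinarith [sq_nonneg (m3v + 1)]
  have hlam0 : (0:ℝ) ≤ lam := by linarith
  rw [hδ, abs_le]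
  constructor
  · nlinarith [mul_le_mul_of_nonneg_left hm3lo hlam0]
  · nlinarith [mul_le_mul_of_nonneg_left hm3up hlam0]

private lemma scalar_gderiv (c8 lam delta xiv wv duv dxivv uv : ℝ)
    (hw2 : wv^2 = xiv^2 + 1) (hwpos : 0 < wv)
    (hdxiv : dxivv = 2*lam*(xiv^2+1))
    (hduv : duv*(xiv^2+1) - uv*xiv*dxivv = delta*(xiv^2+1))
    (hdel : |delta| ≤ c8*lam) :
    0 ≤ (c8/2) * ((dxivv * wv - xiv*(xiv*dxivv/wv))/wv^2) + (duv * wv - uv*(xiv*dxivv/wv))/wv^2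
    ∧ 0 ≤ (c8/2) * ((dxivv * wv - xiv*(xiv*dxivv/wv))/wv^2) - (duv * wv - uv*(xiv*dxivv/wv))/wv^2 := by
  obtain ⟨hd1, hd2⟩ := abs_le.mp hdel
  have hwne : wv ≠ 0 := ne_of_gt hwpos
  have hA : (c8/2) * ((dxivv * wv - xiv*(xiv*dxivv/wv))/wv^2) = c8*lam/wv := by
    rw [hdxiv, ← hw2]
    field_simp
    linear_combination (c8*lam) * hw2
  have hB : (duv * wv - uv*(xiv*dxivv/wv))/wv^2 = delta/wv := by
    rw [div_eq_div_iff (by positivity) hwne]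
    have : duv * wv^2 - uv*xiv*dxivv = delta * wv^2 := by
      rw [hw2]; linarith [hduv]
    field_simp
    nlinarith [this]
  rw [hA, hB]
  constructor
  · rw [← add_div]
    exact div_nonneg (by linarith) hwpos.le
  · rw [div_sub_div_same]
    exact div_nonneg (by linarith) hwpos.le

private lemma scalar_step2 (Pv dPv dxivv xiv : ℝ)
    (hdxiv : dxivv = -(xiv^2+1)*(2*Pv))
    (hP1 : -1 ≤ Pv) (hxi1 : 1 ≤ xiv)
    (hkey : xiv^2/4 ≤ dPv) :
    0 ≤ dPv - dxivv/16 := by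
  have h1 : dxivv ≤ 2*(xiv^2+1) := by
    rw [hdxiv]
    nlinarith [sq_nonneg xiv]
  nlinarith [sq_nonneg xiv]

private lemma scalar_pick (y X hb : ℝ) (hbnn : 0 ≤ hb) (hX : 1 ≤ X) (hy : hb + 2*X ≤ y) :
    (y + hb) * X ≤ y^2 + 1 := by
  nlinarith [mul_le_mul_of_nonneg_right hy (by linarith : (0:ℝ) ≤ X), sq_nonneg (y - X)]

set_option maxHeartbeats 3000000 in
/-- Along a collision solution with `t* < ∞` and `ξ(t) → +∞` as `t → t*⁻`, `m₃`
decays at least like `1/ξ`: there are `M > 0` and `t₁ ∈ [t₀, t*)` with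
`|m₃(t)|·ξ(t) ≤ M` on `[t₁, t*)`. -/
theorem m3_le_inv_xi
    (t0 tstar : ℝ) (ht0 : t0 < tstar)
    (m1 m2 m3 xi p : ℝ → ℝ)
    (hm1 : ∀ t ∈ Set.Ico t0 tstar,
      HasDerivAt m1 (xi t * (-(m2 t)^2 + (m3 t)^2 + 2 * m2 t * m3 t * xi t)) t)
    (hm2 : ∀ t ∈ Set.Ico t0 tstar,
      HasDerivAt m2 (m1 t * m2 t * xi t - m3 t * p t - 2 * m1 t * m3 t * (xi t)^2) t)
    (hm3 : ∀ t ∈ Set.Ico t0 tstar,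
      HasDerivAt m3 (m2 t * p t - m1 t * m3 t * xi t) t)
    (hxi : ∀ t ∈ Set.Ico t0 tstar,
      HasDerivAt xi (-((xi t)^2 + 1) * (2 * p t - m1 t)) t)
    (hp : ∀ t ∈ Set.Ico t0 tstar,
      HasDerivAt p (-((xi t)^2 + 1) * (1 + m2 t * m3 t - 2 * (m3 t)^2 * xi t)) t)
    (hcoll : Tendsto xi (nhdsWithin tstar (Set.Iio tstar)) atTop) :
    ∃ M > (0 : ℝ), ∃ t1 ∈ Set.Ico t0 tstar,
      ∀ t ∈ Set.Ico t1 tstar, |m3 t| * xi t ≤ M := by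
  classical
  -- opaque auxiliary functions
  obtain ⟨P, hP⟩ : ∃ f : ℝ → ℝ, ∀ t, f t = p t - m1 t / 2 := ⟨_, fun _ => rfl⟩
  obtain ⟨u, hu⟩ : ∃ f : ℝ → ℝ, ∀ t, f t = m3 t * xi t - m2 t / 2 := ⟨_, fun _ => rfl⟩
  obtain ⟨dxiF, hdxiF⟩ : ∃ f : ℝ → ℝ, ∀ t, f t = -((xi t)^2 + 1) * (2 * p t - m1 t) :=
    ⟨_, fun _ => rfl⟩
  obtain ⟨dP, hdP⟩ : ∃ f : ℝ → ℝ, ∀ t, f t =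
      -((xi t)^2+1)*(1+m2 t*m3 t-2*(m3 t)^2*xi t)
        - (xi t*(-(m2 t)^2+(m3 t)^2+2*m2 t*m3 t*xi t))/2 := ⟨_, fun _ => rfl⟩
  obtain ⟨du, hdu⟩ : ∃ f : ℝ → ℝ, ∀ t, f t =
      (m2 t * p t - m1 t * m3 t * xi t) * xi t + m3 t * (-((xi t)^2 + 1) * (2 * p t - m1 t))
        - (m1 t * m2 t * xi t - m3 t * p t - 2 * m1 t * m3 t * (xi t)^2) / 2 := ⟨_, fun _ => rfl⟩
  have hxid : ∀ t ∈ Set.Ico t0 tstar, HasDerivAt xi (dxiF t) t := by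
    intro t ht; rw [hdxiF t]; exact hxi t ht
  have hPd : ∀ t ∈ Set.Ico t0 tstar, HasDerivAt P (dP t) t := by
    intro t ht
    rw [show P = fun s => p s - m1 s / 2 from funext hP, hdP t]
    exact (hp t ht).sub ((hm1 t ht).div_const 2)
  have hud : ∀ t ∈ Set.Ico t0 tstar, HasDerivAt u (du t) t := by
    intro t ht
    rw [show u = fun s => m3 s * xi s - m2 s / 2 from funext hu, hdu t]
    exact ((hm3 t ht).mul (hxi t ht)).sub ((hm2 t ht).div_const 2)
  -- a constancy principle on [t0, tstar)
  have const_of : ∀ (g : ℝ → ℝ), (∀ t ∈ Set.Ico t0 tstar, HasDerivAt g 0 t) →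
      ∀ t ∈ Set.Ico t0 tstar, g t = g t0 := by
    intro g hg t ht
    have h1 := monoOn_Ico (d := fun _ => (0:ℝ)) hg (fun _ _ => le_refl 0)
    have h2 := monoOn_Ico (g := fun s => -g s) (d := fun _ => (0:ℝ))
      (fun s hs => by have h := (hg s hs).neg; rw [neg_zero] at h; exact h) (fun _ _ => le_refl 0)
    have ht0' : t0 ∈ Set.Ico t0 tstar := ⟨le_refl t0, ht0⟩
    have ha := h1 ht0' ht ht.1
    have hb : -g t0 ≤ -g t := h2 ht0' ht ht.1
    linarith
  -- conservation of total angular momentum squared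
  obtain ⟨C0, hC0⟩ : ∃ c : ℝ, c = (m1 t0)^2 + (m2 t0)^2 + (m3 t0)^2 := ⟨_, rfl⟩
  have hNconst : ∀ t ∈ Set.Ico t0 tstar, (m1 t)^2 + (m2 t)^2 + (m3 t)^2 = C0 := by
    intro t ht
    have h := const_of (fun s => (m1 s)^2 + (m2 s)^2 + (m3 s)^2) ?_ t ht
    · rw [hC0]; exact h
    · intro s hs
      exact ((((hm1 s hs).pow 2).add ((hm2 s hs).pow 2)).add ((hm3 s hs).pow 2)).congr_deriv
        (by push_cast; ring)
  -- conservation of energy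
  obtain ⟨H0, hH0⟩ : ∃ c : ℝ, c = (P t0)^2 + (u t0)^2 - xi t0 - ((m1 t0)^2 + (m2 t0)^2)/4 :=
    ⟨_, rfl⟩
  have hFconst : ∀ t ∈ Set.Ico t0 tstar,
      (P t)^2 + (u t)^2 - xi t - ((m1 t)^2 + (m2 t)^2)/4 = H0 := by
    intro t ht
    have h := const_of (fun s => (P s)^2 + (u s)^2 - xi s - ((m1 s)^2 + (m2 s)^2)/4) ?_ t ht
    · rw [hH0]; exact h
    · intro s hs
      refine (((((hPd s hs).pow 2).add ((hud s hs).pow 2)).sub (hxi s hs)).sub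
        ((((hm1 s hs).pow 2).add ((hm2 s hs).pow 2)).div_const 4)).congr_deriv ?_
      rw [hdP s, hdu s, hP s, hu s]
      push_cast
      ring
  -- constants
  obtain ⟨hbar, hhbar⟩ : ∃ c : ℝ, c = |H0| + C0/2 := ⟨_, rfl⟩
  obtain ⟨Xi, hXidef⟩ : ∃ c : ℝ, c = 8*(hbar + C0) + 16 := ⟨_, rfl⟩
  obtain ⟨c8, hc8⟩ : ∃ c : ℝ, c = 2*C0 + 2 := ⟨_, rfl⟩
  have hC0nn : 0 ≤ C0 := by rw [hC0]; positivity
  have habs1 : -(hbar - C0/2) ≤ H0 := by rw [hhbar]; simp; exact neg_abs_le H0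
  have habs2 : H0 ≤ hbar - C0/2 := by rw [hhbar]; simp; exact le_abs_self H0
  have hbarnn : 0 ≤ hbar := by rw [hhbar]; positivity
  have hXi16 : 16 ≤ Xi := by rw [hXidef]; linarith
  have hc8nn : 0 ≤ c8 := by rw [hc8]; linarith
  -- pointwise bounds
  have hm1sq : ∀ t ∈ Set.Ico t0 tstar, (m1 t)^2 ≤ C0 := fun t ht => by
    linarith [hNconst t ht, sq_nonneg (m2 t), sq_nonneg (m3 t)]
  have hm2sq : ∀ t ∈ Set.Ico t0 tstar, (m2 t)^2 ≤ C0 := fun t ht => by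
    linarith [hNconst t ht, sq_nonneg (m1 t), sq_nonneg (m3 t)]
  have hm3sq : ∀ t ∈ Set.Ico t0 tstar, (m3 t)^2 ≤ C0 := fun t ht => by
    linarith [hNconst t ht, sq_nonneg (m1 t), sq_nonneg (m2 t)]
  have husq : ∀ t ∈ Set.Ico t0 tstar, (u t)^2 ≤ xi t + hbar := fun t ht => by
    linarith [hFconst t ht, hm1sq t ht, hm2sq t ht, sq_nonneg (P t), habs2]
  -- key derivative estimate
  have keydP : ∀ t ∈ Set.Ico t0 tstar, Xi ≤ xi t → (P t)^2 ≤ 1 → (xi t)^2/4 ≤ dP t := by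
    intro t ht h1 h2
    rw [hXidef] at h1
    exact scalar_keydP (m1 t) (m2 t) (m3 t) (xi t) (p t) H0 C0 (u t) hbar (P t) (dP t)
      (hu t) (hP t) (hdP t) (hFconst t ht) (hm1sq t ht) (hm2sq t ht) (hm3sq t ht) hC0nn
      habs2 habs1 h1 h2
  -- tail on which ξ ≥ Xi
  obtain ⟨t5, ht5, htail⟩ := tail_helper ht0 (hcoll.eventually (eventually_ge_atTop Xi))
  have tailI : ∀ {s : ℝ}, s ∈ Set.Ico t5 tstar → s ∈ Set.Ico t0 tstar :=
    fun hs => ⟨le_trans ht5.1 hs.1, hs.2⟩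
  have pick : ∀ x ∈ Set.Ico t0 tstar, ∀ K : ℝ, ∃ y, y ∈ Set.Ico x tstar ∧ K ≤ xi y := by
    intro x hx K
    have h1 : ∀ᶠ y in nhdsWithin tstar (Set.Iio tstar), K ≤ xi y :=
      hcoll.eventually (eventually_ge_atTop K)
    have h2 : ∀ᶠ y in nhdsWithin tstar (Set.Iio tstar), y ∈ Set.Ioo x tstar :=
      eventually_of_mem (Ioo_mem_nhdsLT hx.2)
        (fun y hy => hy)
    obtain ⟨y, hy1, hy2⟩ := (h1.and h2).exists
    exact ⟨y, ⟨le_of_lt hy2.1, hy2.2⟩, hy1⟩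
  -- Step: P ≤ -1 on the tail
  have hPneg : ∀ t ∈ Set.Ico t5 tstar, P t ≤ -1 := by
    by_contra hcon
    push_neg at hcon
    obtain ⟨a, ha, hPa⟩ := hcon
    have hsub : ∀ {s : ℝ}, s ∈ Set.Ico a tstar → s ∈ Set.Ico t5 tstar :=
      fun hs => ⟨le_trans ha.1 hs.1, hs.2⟩
    have hxiXi : ∀ s ∈ Set.Ico a tstar, Xi ≤ xi s := fun s hs => htail s (hsub hs)
    have hxi1 : ∀ s ∈ Set.Ico a tstar, 1 ≤ xi s := fun s hs => by
      linarith [hxiXi s hs]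
    have hstep1 : ∀ s ∈ Set.Ico a tstar, -1 ≤ P s := by
      refine stay_above (d := dP) (fun s hs => hPd s (tailI (hsub hs))) ?_ hPa.le
      intro s hs hPs
      have hkey := keydP s (tailI (hsub hs)) (hxiXi s hs) (by rw [hPs]; norm_num)
      nlinarith [hxiXi s hs, hXi16]
    have hexb : ∃ b ∈ Set.Ico a tstar, 1 ≤ P b := by
      by_contra hcon2
      push_neg at hcon2
      have hmono := monoOn_Ico (g := fun s => P s - xi s/16) (d := fun s => dP s - dxiF s/16)
        (fun s hs => (hPd s (tailI (hsub hs))).sub ((hxid s (tailI (hsub hs))).div_const 16))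
        ?_
      · obtain ⟨y, hy, hxiy⟩ := pick a (tailI (hsub ⟨le_refl a, ha.2⟩)) (xi a + 48)
        have haa : a ∈ Set.Ico a tstar := ⟨le_refl a, ha.2⟩
        have h := hmono haa hy hy.1
        have h' : P a - xi a/16 ≤ P y - xi y/16 := h
        have hPy := hcon2 y hy
        linarith
      · intro s hs
        have hP2 : (P s)^2 ≤ 1 := by
          have h1 := hstep1 s hs
          have h2 := hcon2 s hs
          nlinarith
        have hkey := keydP s (tailI (hsub hs)) (hxiXi s hs) hP2
        have := scalar_step2 (P s) (dP s) (dxiF s) (xi s)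
          (by rw [hdxiF s, hP s]; ring) (hstep1 s hs) (hxi1 s hs) hkey
        linarith
    obtain ⟨b, hb, hPb⟩ := hexb
    have hsubb : ∀ {s : ℝ}, s ∈ Set.Ico b tstar → s ∈ Set.Ico a tstar :=
      fun hs => ⟨le_trans hb.1 hs.1, hs.2⟩
    have hstep3 : ∀ s ∈ Set.Ico b tstar, 1 ≤ P s := by
      refine stay_above (d := dP) (fun s hs => hPd s (tailI (hsub (hsubb hs)))) ?_ hPb
      intro s hs hPs
      have hkey := keydP s (tailI (hsub (hsubb hs))) (hxiXi s (hsubb hs)) (by rw [hPs]; norm_num)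
      nlinarith [hxiXi s (hsubb hs), hXi16]
    have hmono2 := monoOn_Ico (g := fun s => -xi s) (d := fun s => -dxiF s)
      (fun s hs => (hxid s (tailI (hsub (hsubb hs)))).neg) ?_
    · obtain ⟨y, hy, hxiy⟩ := pick b (tailI (hsub hb)) (xi b + 1)
      have hbb : b ∈ Set.Ico b tstar := ⟨le_refl b, hb.2⟩
      have h := hmono2 hbb hy hy.1
      have h' : -xi b ≤ -xi y := h
      linarith
    · intro s hs
      have h1 := hstep3 s hs
      have h2 : (0:ℝ) ≤ ((xi s)^2+1) * (2 * p s - m1 s) := by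
        apply mul_nonneg (by positivity)
        have := hP s
        linarith
      show (0:ℝ) ≤ -dxiF s
      rw [hdxiF s]
      linarith
  -- square-root machinery
  obtain ⟨w, hw⟩ : ∃ f : ℝ → ℝ, ∀ t, f t = Real.sqrt ((xi t)^2 + 1) := ⟨_, fun _ => rfl⟩
  have hwpos : ∀ t, 0 < w t := fun t => by rw [hw t]; positivity
  have hw2 : ∀ t, (w t)^2 = (xi t)^2 + 1 := fun t => by
    rw [hw t]; exact Real.sq_sqrt (by positivity)
  have hwd : ∀ t ∈ Set.Ico t0 tstar, HasDerivAt w (xi t * dxiF t / w t) t := by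
    intro t ht
    have h1 : HasDerivAt (fun s => (xi s)^2 + 1) (2 * xi t * dxiF t) t :=
      (((hxid t ht).pow 2).add_const 1).congr_deriv (by push_cast; ring)
    have h2 := h1.sqrt (by positivity)
    rw [show w = fun s => Real.sqrt ((xi s)^2+1) from funext hw]
    refine h2.congr_deriv ?_
    have hs0 : Real.sqrt ((xi t)^2+1) ≠ 0 := by positivity
    field_simp
  have hvd : ∀ t ∈ Set.Ico t0 tstar, HasDerivAt (fun s => u s / w s)
      ((du t * w t - u t * (xi t * dxiF t / w t)) / (w t)^2) t :=
    fun t ht => (hud t ht).div (hwd t ht) (hwpos t).ne'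
  have hphid : ∀ t ∈ Set.Ico t0 tstar, HasDerivAt (fun s => xi s / w s)
      ((dxiF t * w t - xi t * (xi t * dxiF t / w t)) / (w t)^2) t :=
    fun t ht => (hxid t ht).div (hwd t ht) (hwpos t).ne'
  -- delta estimate on the tail
  have hlam : ∀ t ∈ Set.Ico t5 tstar, 1 ≤ -(P t) := fun t ht => by linarith [hPneg t ht]
  have hdel : ∀ t ∈ Set.Ico t5 tstar, |m3 t * (m1 t - 3/2 * p t)| ≤ c8 * (-(P t)) := by
    intro t ht
    have h := scalar_delta (m1 t) (m3 t) (p t) (-(P t)) C0 (hm1sq t (tailI ht))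
      (hm3sq t (tailI ht)) (hlam t ht) (by rw [← hP t]; ring)
    rw [hc8]
    exact h
  have hgd : ∀ t ∈ Set.Ico t5 tstar,
      (0 ≤ (c8/2) * ((dxiF t * w t - xi t * (xi t * dxiF t / w t)) / (w t)^2)
          + (du t * w t - u t * (xi t * dxiF t / w t)) / (w t)^2)
      ∧ (0 ≤ (c8/2) * ((dxiF t * w t - xi t * (xi t * dxiF t / w t)) / (w t)^2)
          - (du t * w t - u t * (xi t * dxiF t / w t)) / (w t)^2) := by
    intro t ht
    refine scalar_gderiv c8 (-(P t)) (m3 t * (m1 t - 3/2 * p t)) (xi t) (w t) (du t) (dxiF t)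
      (u t) (hw2 t) (hwpos t) ?_ ?_ (hdel t ht)
    · rw [hdxiF t, hP t]; ring
    · rw [hdu t, hdxiF t, hu t]; ring
  have hmono_p := monoOn_Ico
      (g := fun s => (c8/2) * (xi s / w s) + u s / w s)
      (d := fun s => (c8/2) * ((dxiF s * w s - xi s * (xi s * dxiF s / w s)) / (w s)^2)
          + (du s * w s - u s * (xi s * dxiF s / w s)) / (w s)^2)
      (fun s hs => (HasDerivAt.const_mul (c8/2) (hphid s (tailI hs))).add (hvd s (tailI hs)))
      (fun s hs => (hgd s hs).1)
  have hmono_m := monoOn_Ico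
      (g := fun s => (c8/2) * (xi s / w s) - u s / w s)
      (d := fun s => (c8/2) * ((dxiF s * w s - xi s * (xi s * dxiF s / w s)) / (w s)^2)
          - (du s * w s - u s * (xi s * dxiF s / w s)) / (w s)^2)
      (fun s hs => (HasDerivAt.const_mul (c8/2) (hphid s (tailI hs))).sub (hvd s (tailI hs)))
      (fun s hs => (hgd s hs).2)
  -- conclusion
  obtain ⟨M, hM⟩ : ∃ c : ℝ, c = c8/2 + (1+C0)/4 + 2 := ⟨_, rfl⟩
  refine ⟨M, by rw [hM]; linarith, t5, ht5, ?_⟩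
  intro t ht
  have htI := tailI ht
  have hxit : Xi ≤ xi t := htail t ht
  have hxipos : (0:ℝ) < xi t := by linarith
  obtain ⟨τ, hτ, hxiτ⟩ := pick t htI (hbar + 2*((xi t)^2 + 1))
  have hτ5 : τ ∈ Set.Ico t5 tstar := ⟨le_trans ht.1 hτ.1, hτ.2⟩
  have hτI := tailI hτ5
  have h1 : (c8/2) * (xi t / w t) + u t / w t ≤ (c8/2) * (xi τ / w τ) + u τ / w τ :=
    hmono_p ht hτ5 hτ.1
  have h2 : (c8/2) * (xi t / w t) - u t / w t ≤ (c8/2) * (xi τ / w τ) - u τ / w τ :=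
    hmono_m ht hτ5 hτ.1
  -- |u τ / w τ| ≤ 1 / w t
  have hvτ : |u τ / w τ| ≤ 1 / w t := by
    have e1 : (u τ / w τ)^2 ≤ (1 / w t)^2 := by
      rw [div_pow, div_pow, one_pow, hw2 τ, hw2 t]
      rw [div_le_div_iff₀ (by positivity) (by positivity)]
      have e2 := husq τ hτI
      have e3 := scalar_pick (xi τ) ((xi t)^2+1) hbar hbarnn
        (by nlinarith [sq_nonneg (xi t)]) hxiτ
      nlinarith [mul_le_mul_of_nonneg_right e2 (by positivity : (0:ℝ) ≤ (xi t)^2+1)]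
    calc |u τ / w τ| = Real.sqrt ((u τ / w τ)^2) := (Real.sqrt_sq_eq_abs _).symm
      _ ≤ Real.sqrt ((1/w t)^2) := Real.sqrt_le_sqrt e1
      _ = 1 / w t := Real.sqrt_sq (div_nonneg zero_le_one (hwpos t).le)
  -- basic algebraic facts
  have hfix : xi t / w t * w t = xi t := div_mul_cancel₀ _ (hwpos t).ne'
  have hut : u t / w t * w t = u t := div_mul_cancel₀ _ (hwpos t).ne'
  have honet : (1 / w t) * w t = 1 := one_div_mul_cancel (hwpos t).ne'
  have hφτ : xi τ / w τ ≤ 1 := by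
    rw [div_le_one (hwpos τ)]
    have hsq : (xi τ)^2 ≤ (w τ)^2 := by rw [hw2 τ]; linarith
    have hxiτpos : (0:ℝ) < xi τ := by nlinarith [sq_nonneg (xi t)]
    nlinarith [hwpos τ]
  have hwt1 : w t - xi t ≤ 1 := by nlinarith [hw2 t, hwpos t, hxipos]
  -- upper bound for u t
  have hup : u t ≤ 1 + c8/2 := by
    have hh := mul_le_mul_of_nonneg_right
      (show u t/w t ≤ u τ/w τ + (c8/2)*(xi τ/w τ - xi t/w t) by linarith) (hwpos t).le
    have e4 : (u τ / w τ) * w t ≤ (1/w t) * w t :=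
      mul_le_mul_of_nonneg_right (le_of_abs_le hvτ) (hwpos t).le
    have e5 : (xi τ / w τ) * w t ≤ 1 * w t :=
      mul_le_mul_of_nonneg_right hφτ (hwpos t).le
    have e6 : (c8/2) * ((xi τ/w τ) * w t - xi t) ≤ (c8/2) * (w t - xi t) := by
      apply mul_le_mul_of_nonneg_left _ (by linarith)
      linarith
    have e7 : (c8/2) * (w t - xi t) ≤ (c8/2) * 1 :=
      mul_le_mul_of_nonneg_left hwt1 (by linarith)
    nlinarith [hh, e4, e5, e6, e7, honet, hfix, hut]
  -- lower bound for u t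
  have hlo : -(1 + c8/2) ≤ u t := by
    have hh := mul_le_mul_of_nonneg_right
      (show -(u t/w t) ≤ -(u τ/w τ) + (c8/2)*(xi τ/w τ - xi t/w t) by linarith) (hwpos t).le
    have e4 : (-(u τ / w τ)) * w t ≤ (1/w t) * w t := by
      apply mul_le_mul_of_nonneg_right _ (hwpos t).le
      have := neg_abs_le (u τ / w τ)
      linarith [hvτ, abs_nonneg (u τ / w τ), neg_le_abs (u τ / w τ)]
    have e6 : (c8/2) * ((xi τ/w τ) * w t - xi t) ≤ (c8/2) * (w t - xi t) := by
      apply mul_le_mul_of_nonneg_left _ (by linarith)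
      have e5 : (xi τ / w τ) * w t ≤ 1 * w t :=
        mul_le_mul_of_nonneg_right hφτ (hwpos t).le
      linarith
    have e7 : (c8/2) * (w t - xi t) ≤ (c8/2) * 1 :=
      mul_le_mul_of_nonneg_left hwt1 (by linarith)
    nlinarith [hh, e4, e6, e7, honet, hfix, hut]
  have habs_ut : |u t| ≤ 1 + c8/2 := abs_le.2 ⟨by linarith, hup⟩
  have hm2t : |m2 t| ≤ (1+C0)/2 := by
    nlinarith [sq_abs (m2 t), hm2sq t htI, sq_nonneg (|m2 t| - 1), abs_nonneg (m2 t)]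
  have hrw : |m3 t| * xi t = |m3 t * xi t| := by
    rw [abs_mul, abs_of_nonneg hxipos.le]
  rw [hrw, show m3 t * xi t = u t + m2 t / 2 by rw [hu t]; ring]
  calc |u t + m2 t/2| ≤ |u t| + |m2 t/2| := abs_add_le _ _
    _ = |u t| + |m2 t|/2 := by rw [abs_div]; norm_num
    _ ≤ (1 + c8/2) + ((1+C0)/2)/2 := by linarith
    _ ≤ M := by rw [hM]; linarith
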